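/- Let φ(z) = az + b with a, b ∈ ℂ, |a| < 1. Then the composition operator C_φ f = f ∘ φ is bounded on the Fock space F²(ℂ). -/

import Mathlib

open MeasureTheory Complex Real Filter

/-- The Gaussian-weighted square integrand for the Fock space. -/
noncomputable def fockIntegrand (f : ℂ → ℂ) (z : ℂ) : ℝ := ‖f z‖ ^ 2 * Real.exp (-‖z‖ ^ 2)

/-- The squared Fock norm: π⁻¹ ∫ |f|² e^{-|z|²} dV. -/
noncomputable def fockNormSq (f : ℂ → ℂ) : ℝ := π⁻¹ * ∫ z : ℂ, fockIntegrand f z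

/-- Membership in the Fock space F²(ℂ): entire and Gaussian square-integrable. -/
def MemFock (f : ℂ → ℂ) : Prop := Differentiable ℂ f ∧ Integrable (fockIntegrand f)

section Aux


lemma fockIntegrand_nonneg (f : ℂ → ℂ) (z : ℂ) : 0 ≤ fockIntegrand f z := by
  unfold fockIntegrand; positivity

lemma fockIntegrand_continuous {f : ℂ → ℂ} (hf : Continuous f) :
    Continuous (fockIntegrand f) := by
  unfold fockIntegrand; fun_prop

lemma map_mul_add (a b : ℂ) (ha : a ≠ 0) :
    Measure.map (fun z : ℂ => a * z + b) volume
      = ENNReal.ofReal (Complex.normSq a)⁻¹ • volume := by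
  have h1 : (fun z : ℂ => a * z + b) = (fun z : ℂ => z + b) ∘ (fun z : ℂ => a * z) := rfl
  have hdet : LinearMap.det (Algebra.lmul ℝ ℂ a : ℂ →ₗ[ℝ] ℂ) = Complex.normSq a := by
    rw [← Algebra.norm_apply, Algebra.norm_complex_apply]
  have hne : LinearMap.det (Algebra.lmul ℝ ℂ a : ℂ →ₗ[ℝ] ℂ) ≠ 0 := by
    rw [hdet]; simpa using ha
  have hmul : Measure.map (fun z : ℂ => a * z) volume
      = ENNReal.ofReal (Complex.normSq a)⁻¹ • volume := by
    have := Measure.map_linearMap_addHaar_eq_smul_addHaar (volume : Measure ℂ) hne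
    have habs : |(LinearMap.det (Algebra.lmul ℝ ℂ a : ℂ →ₗ[ℝ] ℂ))⁻¹| = (Complex.normSq a)⁻¹ := by
      rw [hdet]; exact _root_.abs_of_nonneg (inv_nonneg.2 (Complex.normSq_nonneg a))
    rw [habs] at this
    convert this using 2
    · rfl
    · funext z; rfl
  rw [h1, ← Measure.map_map (by fun_prop) (by fun_prop), hmul, Measure.map_smul,
    map_add_right_eq_self volume b]



noncomputable def affineHomeo (a b : ℂ) (ha : a ≠ 0) : ℂ ≃ₜ ℂ :=
  (Homeomorph.mulLeft₀ a ha).trans (Homeomorph.addRight b)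

lemma affineHomeo_apply (a b : ℂ) (ha : a ≠ 0) (z : ℂ) : affineHomeo a b ha z = a * z + b := rfl

lemma integrable_comp_mul_add {g : ℂ → ℝ} (hg : Integrable g) (a b : ℂ) (ha : a ≠ 0) :
    Integrable (fun z => g (a * z + b)) := by
  have me : MeasurableEmbedding (fun z : ℂ => a * z + b) :=
    (affineHomeo a b ha).measurableEmbedding
  have : Integrable g (Measure.map (fun z : ℂ => a * z + b) volume) := by
    rw [map_mul_add a b ha]
    refine (integrable_smul_measure ?_ ENNReal.ofReal_ne_top).2 hg
    simp [Complex.normSq_eq_zero, ha]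
  exact (MeasurableEmbedding.integrable_map_iff me).1 this

lemma integral_comp_mul_add (g : ℂ → ℝ) (a b : ℂ) (ha : a ≠ 0) :
    ∫ z : ℂ, g (a * z + b) = (Complex.normSq a)⁻¹ * ∫ z : ℂ, g z := by
  have me : MeasurableEmbedding (fun z : ℂ => a * z + b) :=
    (affineHomeo a b ha).measurableEmbedding
  rw [← MeasurableEmbedding.integral_map me, map_mul_add a b ha, integral_smul_measure,
    ENNReal.toReal_ofReal (inv_nonneg.2 (Complex.normSq_nonneg a)), smul_eq_mul]

lemma circle_mean_eq {g : ℂ → ℂ} (hg : Differentiable ℂ g) (b : ℂ) {r : ℝ} (hr : 0 < r) :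
    ∫ θ in (0:ℝ)..(2*π), g (circleMap b r θ) = (2*π : ℝ) • g b := by
  have hd : DifferentiableOn ℂ g (Metric.closedBall b r) := hg.differentiableOn
  have hb : b ∈ Metric.ball b r := Metric.mem_ball_self hr
  have h := hd.circleIntegral_sub_inv_smul hb
  rw [circleIntegral] at h
  have hmap : ∀ θ : ℝ, (deriv (circleMap b r) θ) • (circleMap b r θ - b)⁻¹ • g (circleMap b r θ)
      = Complex.I * g (circleMap b r θ) := by
    intro θ
    rw [deriv_circleMap, circleMap_sub_center]
    have hne : circleMap 0 r θ ≠ 0 := by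
      simpa using circleMap_ne_center (c := (0:ℂ)) hr.ne' (θ := θ)
    rw [smul_eq_mul, smul_eq_mul]
    field_simp
  simp_rw [hmap] at h
  rw [intervalIntegral.integral_const_mul] at h
  have hI : (Complex.I : ℂ) ≠ 0 := Complex.I_ne_zero
  have h2 : Complex.I * ∫ θ in (0:ℝ)..(2*π), g (circleMap b r θ)
      = Complex.I * ((2*π : ℝ) • g b) := by
    rw [h]
    rw [smul_eq_mul, Complex.real_smul]
    push_cast
    ring
  exact mul_left_cancel₀ hI h2

lemma circle_mean_sq {f : ℂ → ℂ} (hf : Differentiable ℂ f) (b : ℂ) {r : ℝ} (hr : 0 < r) :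
    2*π*‖f b‖^2 ≤ ∫ θ in (0:ℝ)..(2*π), ‖f (circleMap b r θ)‖^2 := by
  have hg : Differentiable ℂ (fun z => f z * f z) := hf.mul hf
  have h := circle_mean_eq hg b hr
  have hπ : (0:ℝ) ≤ 2*π := by positivity
  calc 2*π*‖f b‖^2 = ‖(2*π : ℝ) • (f b * f b)‖ := by
        rw [norm_smul, Real.norm_eq_abs, _root_.abs_of_nonneg hπ, norm_mul, pow_two]
    _ = ‖∫ θ in (0:ℝ)..(2*π), f (circleMap b r θ) * f (circleMap b r θ)‖ := by rw [h]
    _ ≤ ∫ θ in (0:ℝ)..(2*π), ‖f (circleMap b r θ) * f (circleMap b r θ)‖ :=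
        intervalIntegral.norm_integral_le_integral_norm (by positivity)
    _ = ∫ θ in (0:ℝ)..(2*π), ‖f (circleMap b r θ)‖^2 := by
        congr 1; funext θ; rw [norm_mul, pow_two]

lemma gauss_integrable : Integrable (fun z : ℂ => Real.exp (-‖z‖^2)) := by
  have h := GaussianFourier.integrable_cexp_neg_mul_sq_norm_add (V := ℂ)
    (b := (1:ℂ)) (by norm_num) 0 0
  have h2 := h.norm
  refine h2.congr (ae_of_all _ fun z => ?_)
  simp only [Complex.norm_exp]
  congr 1
  push_cast
  simp [← Complex.ofReal_pow]

lemma gauss_integral : ∫ z : ℂ, Real.exp (-‖z‖^2) = π := by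
  have h := GaussianFourier.integral_rexp_neg_mul_sq_norm (V := ℂ) (b := 1) one_pos
  rw [Complex.finrank_real_complex] at h
  norm_num at h
  simpa using h

lemma norm_affine_sq_le (a b z : ℂ) (ha : ‖a‖ < 1) :
    ‖a * z + b‖^2 ≤ ‖z‖^2 + ‖b‖^2 / (1 - ‖a‖^2) := by
  have h1 : ‖a * z + b‖ ≤ ‖a‖*‖z‖ + ‖b‖ := by
    calc ‖a*z+b‖ ≤ ‖a*z‖+‖b‖ := norm_add_le _ _
      _ = ‖a‖*‖z‖+‖b‖ := by rw [norm_mul]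
  have ht : 0 ≤ ‖a‖ := norm_nonneg a
  have hz : 0 ≤ ‖z‖ := norm_nonneg z
  have hb : 0 ≤ ‖b‖ := norm_nonneg b
  have h2 : 0 < 1 - ‖a‖^2 := by nlinarith
  have h5 : (‖a‖*‖z‖+‖b‖)^2 - ‖z‖^2 ≤ ‖b‖^2/(1-‖a‖^2) := by
    rw [le_div_iff₀ h2]
    nlinarith [sq_nonneg ((1-‖a‖^2)*‖z‖ - ‖a‖*‖b‖)]
  have h4 : ‖a*z+b‖^2 ≤ (‖a‖*‖z‖+‖b‖)^2 := pow_le_pow_left₀ (norm_nonneg _) h1 2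
  linarith



lemma eval_le {f : ℂ → ℂ} (hf : Differentiable ℂ f) (hint : Integrable (fockIntegrand f))
    (b : ℂ) : ‖f b‖^2 ≤ Real.exp ((‖b‖+1)^2) * fockNormSq f := by
  set F := fockIntegrand f with hF
  have hFc : Continuous F := fockIntegrand_continuous hf.continuous
  have hF0 : ∀ z, 0 ≤ F z := fockIntegrand_nonneg f
  set Fb : ℂ → ℝ := fun w => F (b + w) with hFbdef
  have hFbc : Continuous Fb := hFc.comp (by fun_prop)
  have hFbint : Integrable Fb := by
    have me : MeasurableEmbedding (fun w : ℂ => b + w) :=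
      (Homeomorph.addLeft b).measurableEmbedding
    have : Integrable F (Measure.map (fun w : ℂ => b + w) volume) := by
      rwa [map_add_left_eq_self volume b]
    exact me.integrable_map_iff.1 this
  have htrans : ∫ w, Fb w = ∫ z, F z := integral_add_left_eq_self F b
  set F₁ : ℂ → ℝ := (Metric.ball (0:ℂ) 1).indicator Fb with hF₁def
  have hF₁m : Measurable F₁ := hFbc.measurable.indicator measurableSet_ball
  have hF₁0 : ∀ w, 0 ≤ F₁ w := fun w => Set.indicator_nonneg (fun x _ => hF0 _) w
  have hF₁int : Integrable F₁ := by
    refine (IntegrableOn.integrable_indicator ?_ measurableSet_ball)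
    exact ((hFbc.continuousOn).integrableOn_compact (isCompact_closedBall 0 1)).mono_set
      Metric.ball_subset_closedBall
  have hle1 : ∫ w, F₁ w ≤ ∫ w, Fb w :=
    integral_mono hF₁int hFbint (Set.indicator_le_self' (fun x _ => hF0 _))
  -- polar coordinates
  have hpolar : (∫ p in polarCoord.target, p.1 • F₁ (Complex.polarCoord.symm p)) = ∫ w, F₁ w :=
    Complex.integral_comp_polarCoord_symm F₁
  set ψ : ℝ × ℝ → ℂ := fun p => ↑p.1 * (Real.cos p.2 + Real.sin p.2 * Complex.I) with hψdef
  have hψ : ∀ p, Complex.polarCoord.symm p = ψ p := fun p => Complex.polarCoord_symm_apply p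
  have hψc : Continuous ψ := by fun_prop
  have hψabs : ∀ p : ℝ × ℝ, ‖ψ p‖ = |p.1| := by
    intro p; rw [← hψ]
    exact Complex.norm_polarCoord_symm p
  set g : ℝ × ℝ → ℝ := fun p => p.1 * F₁ (ψ p) with hgdef
  have hgm : Measurable g := by
    exact measurable_fst.mul (hF₁m.comp hψc.measurable)
  have hg0 : ∀ p : ℝ × ℝ, 0 ≤ p.1 → 0 ≤ g p := fun p hp => mul_nonneg hp (hF₁0 _)
  have hpolar' : (∫ p in polarCoord.target, g p) = ∫ w, F₁ w := by
    rw [← hpolar]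
    exact setIntegral_congr_fun (polarCoord.open_target.measurableSet)
      (fun p _ => by rw [hgdef]; simp [hψ p, smul_eq_mul])
  -- bound M
  obtain ⟨x₀, _, hx₀⟩ := (isCompact_closedBall (0:ℂ) 1).exists_isMaxOn
    ⟨0, Metric.mem_closedBall_self zero_le_one⟩ hFbc.continuousOn
  set M : ℝ := max (Fb x₀) 0 with hMdef
  have hM0 : 0 ≤ M := le_max_right _ _
  have hMb : ∀ w, F₁ w ≤ M := by
    intro w
    by_cases hw : w ∈ Metric.ball (0:ℂ) 1
    · rw [hF₁def, Set.indicator_of_mem hw]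
      exact le_max_of_le_left (hx₀ (Metric.ball_subset_closedBall hw))
    · rw [hF₁def, Set.indicator_of_notMem hw]; exact hM0
  set T : Set (ℝ × ℝ) := polarCoord.target with hTdef
  set S : Set (ℝ × ℝ) := Set.Ioo (0:ℝ) 1 ×ˢ Set.Ioo (-π) π with hSdef
  have hT' : T = Set.Ioi (0:ℝ) ×ˢ Set.Ioo (-π) π := rfl
  have hTmeas : MeasurableSet T := by rw [hT']; exact measurableSet_Ioi.prod measurableSet_Ioo
  have hSmeas : MeasurableSet S := measurableSet_Ioo.prod measurableSet_Ioo
  have hST : S ⊆ T := by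
    rw [hSdef, hT']; exact Set.prod_mono Set.Ioo_subset_Ioi_self le_rfl
  have hSvol : volume S < ⊤ := by
    rw [hSdef]
    exact ((Bornology.IsBounded.prod (Metric.isBounded_Ioo _ _)
      (Metric.isBounded_Ioo _ _))).measure_lt_top
  have hgz : ∀ p : ℝ × ℝ, 1 ≤ p.1 → g p = 0 := by
    intro p hp
    have hnb : ψ p ∉ Metric.ball (0:ℂ) 1 := by
      simp only [Metric.mem_ball, dist_zero_right, not_lt]
      rw [hψabs p]; exact le_trans hp (le_abs_self _)
    rw [hgdef]; simp only
    rw [hF₁def, Set.indicator_of_notMem hnb, mul_zero]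
  have hbound_int : Integrable (S.indicator (fun _ => M)) := by
    rw [integrable_indicator_iff hSmeas]
    exact integrableOn_const hSvol.ne
  have hgT : IntegrableOn g T := by
    refine Integrable.mono' (hbound_int.restrict) (hgm.aestronglyMeasurable.restrict) ?_
    rw [ae_restrict_iff' hTmeas]
    refine ae_of_all _ (fun p hp => ?_)
    rw [hT'] at hp
    obtain ⟨hp1, hp2⟩ := hp
    rcases lt_or_ge p.1 1 with h1 | h1
    · have hpS : p ∈ S := by rw [hSdef]; exact ⟨⟨hp1, h1⟩, hp2⟩
      rw [Real.norm_eq_abs, _root_.abs_of_nonneg (hg0 p (le_of_lt hp1)), Set.indicator_of_mem hpS]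
      calc g p = p.1 * F₁ (ψ p) := rfl
        _ ≤ 1 * M := mul_le_mul (le_of_lt h1) (hMb _) (hF₁0 _) zero_le_one
        _ = M := one_mul M
    · rw [Real.norm_eq_abs, hgz p h1, abs_zero]
      exact Set.indicator_nonneg (fun _ _ => hM0) p
  have hTSint : ∫ p in T, g p = ∫ p in S, g p := by
    have h1 : ∫ p in T, g p = ∫ p in T, S.indicator g p := by
      refine setIntegral_congr_fun hTmeas (fun p hp => ?_)
      by_cases hpS : p ∈ S
      · rw [Set.indicator_of_mem hpS]
      · rw [Set.indicator_of_notMem hpS]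
        rw [hT'] at hp
        rw [hSdef] at hpS
        have h1le : 1 ≤ p.1 := by
          by_contra hlt
          push_neg at hlt
          exact hpS ⟨⟨hp.1, hlt⟩, hp.2⟩
        exact hgz p h1le
    rw [h1, setIntegral_indicator hSmeas, Set.inter_eq_self_of_subset_right hST]
  have hgS : IntegrableOn g S := hgT.mono_set hST
  have hgS' : Integrable g ((volume.restrict (Set.Ioo (0:ℝ) 1)).prod
      (volume.restrict (Set.Ioo (-π) π))) := by
    rw [Measure.prod_restrict]
    rw [hSdef, Measure.volume_eq_prod] at hgS
    exact hgS
  have hprod : ∫ p in S, g p = ∫ r in Set.Ioo (0:ℝ) 1, ∫ θ in Set.Ioo (-π) π, g (r, θ) := by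
    rw [hSdef, Measure.volume_eq_prod]
    rw [hSdef, Measure.volume_eq_prod] at hgS
    exact setIntegral_prod g hgS
  have hmarg : IntegrableOn (fun r => ∫ θ in Set.Ioo (-π) π, g (r, θ)) (Set.Ioo (0:ℝ) 1) :=
    hgS'.integral_prod_left
  set c : ℝ := Real.exp (-(‖b‖+1)^2) * (2*π*‖f b‖^2) with hcdef
  have hc0 : 0 ≤ c := by positivity
  have hinner : ∀ r ∈ Set.Ioo (0:ℝ) 1, c * r ≤ ∫ θ in Set.Ioo (-π) π, g (r, θ) := by
    rintro r ⟨hr0, hr1⟩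
    have hψcirc : ∀ θ : ℝ, ψ (r, θ) = circleMap 0 r θ := by
      intro θ
      rw [hψdef]
      simp [circleMap, Complex.exp_mul_I]
    have hgr : ∀ θ : ℝ, g (r, θ) = r * F (circleMap b r θ) := by
      intro θ
      have hmem : ψ (r, θ) ∈ Metric.ball (0:ℂ) 1 := by
        simp only [Metric.mem_ball, dist_zero_right]
        rw [hψabs]
        simpa [abs_of_pos hr0] using hr1
      rw [hgdef]; simp only
      rw [hF₁def, Set.indicator_of_mem hmem, hFbdef]; simp only
      congr 1
      rw [hψcirc θ]
      simp [circleMap]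
    have hnormle : ∀ θ : ℝ, ‖circleMap b r θ‖ ≤ ‖b‖ + 1 := by
      intro θ
      calc ‖circleMap b r θ‖ ≤ ‖b‖ + ‖(r:ℂ) * Complex.exp (θ * Complex.I)‖ :=
            norm_add_le _ _
        _ ≤ ‖b‖ + 1 := by
            rw [norm_mul, Complex.norm_exp_ofReal_mul_I]
            simp only [mul_one, Complex.norm_real, Real.norm_eq_abs, abs_of_pos hr0]
            linarith
    have hFlow : ∀ θ : ℝ, Real.exp (-(‖b‖+1)^2) * ‖f (circleMap b r θ)‖^2
        ≤ F (circleMap b r θ) := by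
      intro θ
      have hexple : Real.exp (-(‖b‖+1)^2) ≤ Real.exp (-‖circleMap b r θ‖^2) := by
        apply Real.exp_le_exp.2
        have := hnormle θ
        nlinarith [norm_nonneg (circleMap b r θ), norm_nonneg b]
      calc Real.exp (-(‖b‖+1)^2) * ‖f (circleMap b r θ)‖^2
          ≤ Real.exp (-‖circleMap b r θ‖^2) * ‖f (circleMap b r θ)‖^2 :=
            mul_le_mul_of_nonneg_right hexple (sq_nonneg _)
        _ = F (circleMap b r θ) := by rw [hF]; unfold fockIntegrand; ring
    have hcont2 : Continuous (fun θ : ℝ => ‖f (circleMap b r θ)‖^2) := by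
      have : Continuous (circleMap b r) := continuous_circleMap b r
      have hfc : Continuous f := hf.continuous
      fun_prop
    have h1int : IntegrableOn (fun θ : ℝ => ‖f (circleMap b r θ)‖^2) (Set.Ioo (-π) π) :=
      ((hcont2.continuousOn).integrableOn_compact isCompact_Icc).mono_set Set.Ioo_subset_Icc_self
    have h2int : IntegrableOn (fun θ : ℝ => r * F (circleMap b r θ)) (Set.Ioo (-π) π) := by
      have hcF : Continuous (fun θ : ℝ => r * F (circleMap b r θ)) := by
        have : Continuous (circleMap b r) := continuous_circleMap b r
        fun_prop
      exact ((hcF.continuousOn).integrableOn_compact isCompact_Icc).mono_set Set.Ioo_subset_Icc_self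
    have hper : Function.Periodic (fun θ : ℝ => ‖f (circleMap b r θ)‖^2) (2*π) := by
      intro θ
      simp [periodic_circleMap b r θ]
    have hshift : ∫ θ in (-π)..π, ‖f (circleMap b r θ)‖^2
        = ∫ θ in (0:ℝ)..(2*π), ‖f (circleMap b r θ)‖^2 := by
      have h := hper.intervalIntegral_add_eq (-π) 0
      rw [show -π + 2*π = π by ring, zero_add] at h
      exact h
    have hmean : 2*π*‖f b‖^2 ≤ ∫ θ in Set.Ioo (-π) π, ‖f (circleMap b r θ)‖^2 := by
      rw [← integral_Ioc_eq_integral_Ioo,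
        ← intervalIntegral.integral_of_le (by linarith [Real.pi_pos] : -π ≤ π), hshift]
      exact circle_mean_sq hf b hr0
    calc c * r = (r * Real.exp (-(‖b‖+1)^2)) * (2*π*‖f b‖^2) := by rw [hcdef]; ring
      _ ≤ (r * Real.exp (-(‖b‖+1)^2)) * ∫ θ in Set.Ioo (-π) π, ‖f (circleMap b r θ)‖^2 := by
          apply mul_le_mul_of_nonneg_left hmean (by positivity)
      _ = ∫ θ in Set.Ioo (-π) π, (r * Real.exp (-(‖b‖+1)^2)) * ‖f (circleMap b r θ)‖^2 := by
          rw [← integral_const_mul]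
      _ ≤ ∫ θ in Set.Ioo (-π) π, r * F (circleMap b r θ) := by
          refine setIntegral_mono_on (by exact (h1int.const_mul _)) h2int measurableSet_Ioo
            (fun θ _ => ?_)
          rw [mul_assoc]
          exact mul_le_mul_of_nonneg_left (hFlow θ) (le_of_lt hr0)
      _ = ∫ θ in Set.Ioo (-π) π, g (r, θ) := by
          refine setIntegral_congr_fun measurableSet_Ioo (fun θ _ => ?_)
          rw [hgr θ]
  have hhalf : c * (1/2) ≤ ∫ p in S, g p := by
    rw [hprod]
    have hconst : IntegrableOn (fun r : ℝ => c * r) (Set.Ioo (0:ℝ) 1) := by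
      have : Continuous (fun r : ℝ => c * r) := by fun_prop
      exact ((this.continuousOn).integrableOn_compact isCompact_Icc).mono_set
        Set.Ioo_subset_Icc_self
    have hmono := setIntegral_mono_on hconst hmarg measurableSet_Ioo hinner
    refine le_trans (le_of_eq ?_) hmono
    rw [← integral_Ioc_eq_integral_Ioo, ← intervalIntegral.integral_of_le zero_le_one,
      intervalIntegral.integral_const_mul, integral_id]
    norm_num
  -- final assembly
  have hchain : c * (1/2) ≤ ∫ z, F z := by
    calc c * (1/2) ≤ ∫ p in S, g p := hhalf
      _ = ∫ p in T, g p := hTSint.symm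
      _ = ∫ w, F₁ w := hpolar'
      _ ≤ ∫ w, Fb w := hle1
      _ = ∫ z, F z := htrans
  have hexp : (0:ℝ) < Real.exp ((‖b‖+1)^2) := Real.exp_pos _
  have hπ : (0:ℝ) < π := Real.pi_pos
  have hcval : c * (1/2) = Real.exp (-(‖b‖+1)^2) * π * ‖f b‖^2 := by rw [hcdef]; ring
  have hns : Real.exp (-(‖b‖+1)^2) * π * ‖f b‖^2 ≤ ∫ z, F z := hcval ▸ hchain
  have hmain : Real.exp (-(‖b‖+1)^2) * ‖f b‖^2 ≤ fockNormSq f := by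
    unfold fockNormSq
    rw [← hF]
    have h2 : π⁻¹ * (Real.exp (-(‖b‖+1)^2) * π * ‖f b‖^2) ≤ π⁻¹ * ∫ z, F z :=
      mul_le_mul_of_nonneg_left hns (by positivity)
    calc Real.exp (-(‖b‖+1)^2) * ‖f b‖^2
        = π⁻¹ * (Real.exp (-(‖b‖+1)^2) * π * ‖f b‖^2) := by field_simp
      _ ≤ π⁻¹ * ∫ z, F z := h2
  calc ‖f b‖^2 = Real.exp ((‖b‖+1)^2) * (Real.exp (-(‖b‖+1)^2) * ‖f b‖^2) := by
        rw [← mul_assoc, ← Real.exp_add]; simp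
    _ ≤ Real.exp ((‖b‖+1)^2) * fockNormSq f :=
        mul_le_mul_of_nonneg_left hmain (le_of_lt hexp)
end Aux


/-- The composition operator C_φ f = f ∘ φ with φ(z) = az + b, |a| < 1,
is bounded on the Fock space. -/
theorem composition_operator_bounded (a b : ℂ) (ha : ‖a‖ < 1) :
    ∃ C : ℝ, 0 < C ∧ ∀ f : ℂ → ℂ, MemFock f →
      MemFock (fun z => f (a * z + b)) ∧
        fockNormSq (fun z => f (a * z + b)) ≤ C * fockNormSq f := by
  rcases eq_or_ne a 0 with rfl | ha0
  · refine ⟨Real.exp ((‖b‖+1)^2), Real.exp_pos _, fun f hf => ?_⟩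
    have hfb : (fun z : ℂ => f (0 * z + b)) = fun _ => f b := by
      funext z; rw [zero_mul, zero_add]
    rw [hfb]
    have hconstint : Integrable (fockIntegrand (fun _ => f b)) := by
      have := gauss_integrable.const_mul (‖f b‖^2)
      refine this.congr (ae_of_all _ fun z => ?_)
      unfold fockIntegrand
      rfl
    have hval : fockNormSq (fun _ => f b) = ‖f b‖^2 := by
      unfold fockNormSq fockIntegrand
      rw [integral_const_mul, gauss_integral]
      field_simp
    refine ⟨⟨differentiable_const _, hconstint⟩, ?_⟩
    rw [hval]
    exact eval_le hf.1 hf.2 b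
  · set M : ℝ := ‖b‖^2 / (1 - ‖a‖^2) with hMdef
    refine ⟨Real.exp M * (Complex.normSq a)⁻¹,
      mul_pos (Real.exp_pos _) (inv_pos.2 (Complex.normSq_pos.2 ha0)), fun f hf => ?_⟩
    have hd : Differentiable ℂ (fun z => f (a*z+b)) := by
      apply hf.1.comp
      fun_prop
    have hcomp_int : Integrable (fun z => fockIntegrand f (a*z+b)) :=
      integrable_comp_mul_add hf.2 a b ha0
    have hpt : ∀ z, fockIntegrand (fun z => f (a*z+b)) z
        ≤ Real.exp M * fockIntegrand f (a*z+b) := by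
      intro z
      have h1 := norm_affine_sq_le a b z ha
      have h2 : Real.exp (-‖z‖^2) ≤ Real.exp M * Real.exp (-‖a*z+b‖^2) := by
        rw [← Real.exp_add]
        apply Real.exp_le_exp.2
        rw [hMdef]
        linarith
      have h3 := mul_le_mul_of_nonneg_left h2 (by positivity : (0:ℝ) ≤ ‖f (a*z+b)‖^2)
      unfold fockIntegrand
      calc ‖f (a*z+b)‖^2 * Real.exp (-‖z‖^2)
          ≤ ‖f (a*z+b)‖^2 * (Real.exp M * Real.exp (-‖a*z+b‖^2)) := h3
        _ = Real.exp M * (‖f (a*z+b)‖^2 * Real.exp (-‖a*z+b‖^2)) := by ring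
    have hint2 : Integrable (fockIntegrand (fun z => f (a*z+b))) := by
      refine Integrable.mono' (hcomp_int.const_mul (Real.exp M))
        ((fockIntegrand_continuous hd.continuous).aestronglyMeasurable)
        (ae_of_all _ fun z => ?_)
      rw [Real.norm_eq_abs, _root_.abs_of_nonneg (fockIntegrand_nonneg _ _)]
      exact hpt z
    refine ⟨⟨hd, hint2⟩, ?_⟩
    unfold fockNormSq
    have hI : ∫ z, fockIntegrand (fun z => f (a*z+b)) z
        ≤ Real.exp M * ((Complex.normSq a)⁻¹ * ∫ z, fockIntegrand f z) := by
      calc ∫ z, fockIntegrand (fun z => f (a*z+b)) z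
          ≤ ∫ z, Real.exp M * fockIntegrand f (a*z+b) :=
            integral_mono hint2 (hcomp_int.const_mul _) hpt
        _ = Real.exp M * ∫ z, fockIntegrand f (a*z+b) := integral_const_mul _ _
        _ = Real.exp M * ((Complex.normSq a)⁻¹ * ∫ z, fockIntegrand f z) := by
            rw [integral_comp_mul_add (fockIntegrand f) a b ha0]
    calc π⁻¹ * ∫ z, fockIntegrand (fun z => f (a*z+b)) z
        ≤ π⁻¹ * (Real.exp M * ((Complex.normSq a)⁻¹ * ∫ z, fockIntegrand f z)) :=
          mul_le_mul_of_nonneg_left hI (by positivity)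
      _ = Real.exp M * (Complex.normSq a)⁻¹ * (π⁻¹ * ∫ z, fockIntegrand f z) := by ring
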